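/- For an integer n ≥ 2, let π_n denote the product of the first n prime numbers and consider the pair of univariate polynomials F = (x^{π_n} − 1, x − π_n) over ℤ. Then F has no common zero in ℂ, yet the number of primes p such that the reductions of the two polynomials modulo p have a common zero in ℤ/pℤ is at least 2^n. -/

import Mathlib

open Polynomial Finset

lemma cyclo_dvd_pow_sub_one (a d m : ℕ) (hd : d ∣ m) : 
    (cyclotomic d ℤ).eval (a:ℤ) ∣ (a:ℤ)^m - 1 := by
  obtain ⟨k, rfl⟩ := hd
  have h1 : (cyclotomic d ℤ).eval (a:ℤ) ∣ (a:ℤ)^d - 1 := by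
    have h := cyclotomic.dvd_X_pow_sub_one (n := d) (R := ℤ)
    have := _root_.map_dvd (Polynomial.evalRingHom (a:ℤ)) h
    simpa using this
  calc (cyclotomic d ℤ).eval (a:ℤ) ∣ (a:ℤ)^d - 1 := h1
    _ ∣ ((a:ℤ)^d)^k - 1^k := sub_dvd_pow_sub_pow _ _ _
    _ = (a:ℤ)^(d*k) - 1 := by rw [← pow_mul, one_pow]

lemma cyclo_dvd_geom (m p : ℕ) (hm : 0 < m) (hp : 1 < p) :
    cyclotomic (m * p) ℤ ∣ ∑ j ∈ range p, (X : ℤ[X])^(m*j) := by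
  set d := m * p with hd
  have hdpos : 0 < d := Nat.mul_pos hm (lt_trans one_pos hp)
  have hmd : m ∣ d := ⟨p, rfl⟩
  have hsub : m.divisors ⊆ d.divisors := Nat.divisors_subset_of_dvd hdpos.ne' hmd
  have hXm : ((X : ℤ[X])^m - 1) ≠ 0 := by
    intro h
    have := congrArg (Polynomial.eval (2:ℤ)) h
    simp at this
    nlinarith [pow_le_pow_right₀ (by norm_num : (1:ℤ) ≤ 2) hm, this]
  have key : ((X:ℤ[X])^m - 1) * (∏ e ∈ d.divisors \ m.divisors, cyclotomic e ℤ)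
      = ((X:ℤ[X])^m - 1) * (∑ j ∈ range p, (X : ℤ[X])^(m*j)) := by
    have h1 : ((X:ℤ[X])^m - 1) * (∏ e ∈ d.divisors \ m.divisors, cyclotomic e ℤ) = X^d - 1 := by
      rw [← prod_cyclotomic_eq_X_pow_sub_one hm, ← prod_cyclotomic_eq_X_pow_sub_one hdpos,
        ← Finset.prod_sdiff hsub]
      ring
    have h2 : ((X:ℤ[X])^m - 1) * (∑ j ∈ range p, (X : ℤ[X])^(m*j)) = X^d - 1 := by
      have h := geom_sum_mul ((X:ℤ[X])^m) p
      have h3 : ∀ j, ((X:ℤ[X])^m)^j = X^(m*j) := fun j => by rw [← pow_mul]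
      simp_rw [h3] at h
      rw [mul_comm] at h
      rw [h, hd]
    rw [h1, h2]
  have heq := mul_left_cancel₀ hXm key
  rw [← heq]
  apply Finset.dvd_prod_of_mem
  simp only [Finset.mem_sdiff, Nat.mem_divisors]
  refine ⟨⟨dvd_rfl, hdpos.ne'⟩, ?_⟩
  intro hmem
  have h5 := Nat.le_of_dvd hm hmem.1
  have : m < d := by
    have : m * 1 < m * p := Nat.mul_lt_mul_of_le_of_lt (le_refl m) hp hm
    simpa using this
  omega

lemma geom_sum_not_sq_dvd (p : ℕ) (hp : p.Prime) (hodd : p ≠ 2) (t : ℤ) :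
    ¬ ((p:ℤ)^2 ∣ ∑ j ∈ range p, (1 + t*p)^j) := by
  have key : ∀ j : ℕ, ((p:ℤ)^2) ∣ (1 + t*p)^j - (1 + j*t*p) := by
    intro j
    induction j with
    | zero => simp
    | succ j ih =>
      obtain ⟨c, hc⟩ := ih
      have : (1 + t*(p:ℤ))^(j+1) - (1 + (j+1:ℕ)*t*p)
          = ((1 + t*p)^j - (1 + j*t*p)) * (1 + t*p) + (j*t*p)*(t*p) := by
        push_cast
        ring
      rw [this, hc]
      exact dvd_add (Dvd.dvd.mul_right ⟨c, rfl⟩ _) ⟨(j:ℤ)*t*t, by ring⟩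
  have hsum : ((p:ℤ)^2) ∣ (∑ j ∈ range p, (1 + t*p)^j) - (∑ j ∈ range p, (1 + (j:ℤ)*t*p)) := by
    rw [← Finset.sum_sub_distrib]
    exact Finset.dvd_sum fun j _ => key j
  -- compute second sum
  obtain ⟨k, hk⟩ : p ∣ ∑ j ∈ range p, j := by
    have h2 : (∑ j ∈ range p, j) * 2 = p * (p - 1) := Finset.sum_range_id_mul_two p
    have hpd : p ∣ (∑ j ∈ range p, j) * 2 := h2 ▸ Dvd.intro _ rfl
    rcases (Nat.Prime.dvd_mul hp).mp hpd with h | h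
    · exact h
    · have h2le := hp.two_le
      have := Nat.le_of_dvd (by omega) h
      omega
  have hsum2 : (∑ j ∈ range p, (1 + (j:ℤ)*t*p)) = p + (k*t*p)*p := by
    rw [Finset.sum_add_distrib]
    simp only [Finset.sum_const, Finset.card_range, nsmul_eq_mul, mul_one]
    have : ∑ j ∈ range p, (j:ℤ)*t*p = (∑ j ∈ range p, (j:ℤ))*t*p := by
      rw [Finset.sum_mul, Finset.sum_mul]
    rw [this]
    have hcast : (∑ j ∈ range p, (j:ℤ)) = ((∑ j ∈ range p, j : ℕ) : ℤ) := by push_cast; rfl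
    rw [hcast, hk]; push_cast; ring
  intro hdvd
  have : ((p:ℤ)^2) ∣ (p:ℤ) := by
    have h1 : ((p:ℤ)^2) ∣ (∑ j ∈ range p, (1 + (j:ℤ)*t*p)) := by
      have := dvd_sub hdvd hsum
      simpa using this
    rw [hsum2] at h1
    have h2 : ((p:ℤ)^2) ∣ (k*t)*(p:ℤ)^2 := ⟨k*t, by ring⟩
    have := dvd_sub h1 h2
    have heq : (p:ℤ) + (k*t*p)*p - (k*t)*(p:ℤ)^2 = p := by ring
    rwa [heq] at this
  have hple := Int.le_of_dvd (by exact_mod_cast hp.pos) this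
  have : (p:ℤ) ≥ 2 := by exact_mod_cast hp.two_le
  nlinarith

lemma cyclo_eval_gt (a d : ℕ) (ha : 6 ≤ a) (hd1 : 1 ≤ d) (hda : d ≤ a) :
    (d:ℤ) < (cyclotomic d ℤ).eval (a:ℤ) := by
  rcases eq_or_lt_of_le hd1 with h1 | h2
  · rw [← h1, cyclotomic_one]
    simp only [eval_sub, eval_X, eval_one]
    omega
  · -- d ≥ 2
    have hlt : ((a:ℤ) - 1)^(Nat.totient d) < (cyclotomic d ℤ).eval (a:ℤ) := by
      have hq : (1:ℝ) < (a:ℝ) := by exact_mod_cast by omega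
      have hr := Polynomial.sub_one_pow_totient_lt_cyclotomic_eval (n := d) (q := (a:ℝ)) h2 hq
      have hcast : (cyclotomic d ℝ).eval (((a:ℤ)):ℝ) = (((cyclotomic d ℤ).eval (a:ℤ) : ℤ) : ℝ) := by
        rw [← map_cyclotomic_int d ℝ, eval_intCast_map]
        rfl
      have h0 : (((a:ℤ)):ℝ) = (a:ℝ) := by push_cast; ring
      have : (((a:ℤ) - 1 : ℤ)^(Nat.totient d) : ℝ) < (((cyclotomic d ℤ).eval (a:ℤ) : ℤ) : ℝ) := by
        rw [← hcast, h0]; push_cast; exact hr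
      exact_mod_cast this
    have hbound : (d:ℤ) ≤ ((a:ℤ) - 1)^(Nat.totient d) := by
      rcases Nat.lt_or_ge d 3 with h3 | h3
      · -- d = 2
        have : Nat.totient d ≥ 1 := Nat.totient_pos.mpr (by omega)
        calc (d:ℤ) ≤ 3 := by omega
          _ ≤ ((a:ℤ) - 1)^1 := by rw [pow_one]; omega
          _ ≤ ((a:ℤ) - 1)^(Nat.totient d) := pow_le_pow_right₀ (by omega) this
      · have ht2 : 2 ≤ Nat.totient d := by
          rcases Nat.lt_or_ge (Nat.totient d) 2 with h | h
          · interval_cases h' : Nat.totient d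
            · exact absurd h' (Nat.totient_pos.mpr (by omega)).ne'
            · rcases Nat.totient_eq_one_iff.mp h' with rfl | rfl <;> omega
          · exact h
        calc (d:ℤ) ≤ (a:ℤ) := by exact_mod_cast hda
          _ ≤ ((a:ℤ) - 1)^2 := by nlinarith [show (6:ℤ) ≤ (a:ℤ) from by exact_mod_cast ha]
          _ ≤ ((a:ℤ) - 1)^(Nat.totient d) := pow_le_pow_right₀ (by omega) ht2
    omega

lemma exists_order_eq (a d : ℕ) (ha : 6 ≤ a) (ha2 : 2 ∣ a) (hsq : Squarefree a) (hd : d ∣ a) :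
    ∃ p : ℕ, p.Prime ∧ orderOf ((a : ZMod p)) = d := by
  have hd1 : 1 ≤ d := Nat.pos_of_dvd_of_pos hd (by omega)
  have hda : d ≤ a := Nat.le_of_dvd (by omega) hd
  have hsqd : Squarefree d := hsq.squarefree_of_dvd hd
  set Φ : ℤ := (cyclotomic d ℤ).eval (a:ℤ) with hPhi
  have hgt : (d:ℤ) < Φ := cyclo_eval_gt a d ha hd1 hda
  set N : ℕ := Φ.toNat with hNdef
  have hNZ : (N:ℤ) = Φ := Int.toNat_of_nonneg (by omega)
  have hNgt : d < N := by omega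
  by_contra hcon
  push_neg at hcon
  have hkey : ∀ p : ℕ, p.Prime → p ∣ N → p ∣ d ∧ ¬ (p*p ∣ N) := by
    intro p hp hpN
    haveI : Fact p.Prime := ⟨hp⟩
    have hpΦ : (p:ℤ) ∣ Φ := by
      rw [← hNZ]; exact_mod_cast Int.natCast_dvd_natCast.mpr hpN
    have hΦdvd : Φ ∣ (a:ℤ)^d - 1 := cyclo_dvd_pow_sub_one a d d dvd_rfl
    have hpad : (p:ℤ) ∣ (a:ℤ)^d - 1 := hpΦ.trans hΦdvd
    -- p is odd
    have hodd : p ≠ 2 := by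
      rintro rfl
      have h1 : (2:ℤ) ∣ (a:ℤ) := by exact_mod_cast Int.natCast_dvd_natCast.mpr ha2
      have h2 : (2:ℤ) ∣ (a:ℤ)^d := dvd_pow h1 (by omega)
      have h3 : (2:ℤ) ∣ 1 := by have h4 := dvd_sub h2 hpad; simpa using h4
      norm_num at h3
    -- a^d = 1 in ZMod p
    have hpow : (a : ZMod p)^d = 1 := by
      have : (((a:ℤ)^d - 1 : ℤ) : ZMod p) = 0 :=
        (ZMod.intCast_zmod_eq_zero_iff_dvd _ p).mpr hpad
      push_cast at this
      linear_combination this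
    have hfin : IsOfFinOrder ((a : ZMod p)) :=
      isOfFinOrder_iff_pow_eq_one.mpr ⟨d, by omega, hpow⟩
    set f := orderOf ((a : ZMod p)) with hf
    have hfd : f ∣ d := orderOf_dvd_of_pow_eq_one hpow
    have hfne : f ≠ d := hcon p hp
    have hane : (a : ZMod p) ≠ 0 := by
      intro h
      rw [h, zero_pow (by omega)] at hpow
      exact zero_ne_one hpow
    have hfpos : 0 < f := hfin.orderOf_pos
    have hfp : f ∣ p - 1 := ZMod.orderOf_dvd_card_sub_one hane
    have hp2 := hp.two_le
    have hflt : f < p := lt_of_le_of_lt (Nat.le_of_dvd (by omega) hfp) (by omega)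
    -- p ∣ d
    have hpd : p ∣ d := by
      by_contra hpd
      haveI : NeZero ((d : ZMod p)) := ⟨by
        rw [Ne, ZMod.natCast_eq_zero_iff]; exact hpd⟩
      have hroot : IsRoot (cyclotomic d (ZMod p)) ((a : ZMod p)) := by
        have : ((Φ : ℤ) : ZMod p) = 0 := (ZMod.intCast_zmod_eq_zero_iff_dvd _ p).mpr hpΦ
        rw [IsRoot, ← map_cyclotomic_int d (ZMod p)]
        have h2 : ((a : ZMod p)) = (((a:ℤ)) : ZMod p) := by push_cast; rfl
        rw [h2, eval_intCast_map]
        exact this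
      have := (isRoot_cyclotomic_iff.mp hroot).eq_orderOf
      exact hfne this.symm
    refine ⟨hpd, ?_⟩
    -- multiplicity
    obtain ⟨m, hm⟩ := hpd
    have hm1 : 0 < m := by nlinarith [hp.two_le]
    have hfm : f ∣ m := by
      have hnd : ¬ p ∣ f := fun h => absurd (Nat.le_of_dvd hfpos h) (by omega)
      have hcop : Nat.Coprime f p := Nat.Coprime.symm (hp.coprime_iff_not_dvd.mpr hnd)
      exact hcop.dvd_of_dvd_mul_left (hm ▸ hfd)
    have hpam : (p:ℤ) ∣ (a:ℤ)^m - 1 := by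
      have hm1' : (a : ZMod p)^m = 1 := orderOf_dvd_iff_pow_eq_one.mp hfm
      rw [← ZMod.intCast_zmod_eq_zero_iff_dvd]
      push_cast
      linear_combination hm1'
    obtain ⟨t, ht⟩ := hpam
    have ham : (a:ℤ)^m = 1 + t*(p:ℤ) := by linarith [ht]
    have hΦS : Φ ∣ ∑ j ∈ range p, (1 + t*(p:ℤ))^j := by
      have hdvd := cyclo_dvd_geom m p hm1 hp.one_lt
      rw [mul_comm m p, ← hm] at hdvd
      have h5 := _root_.map_dvd (Polynomial.evalRingHom (a:ℤ)) hdvd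
      simp only [coe_evalRingHom, eval_finset_sum, eval_pow, eval_X] at h5
      have h6 : ∀ j, (a:ℤ)^(m*j) = (1+t*(p:ℤ))^j := fun j => by rw [pow_mul, ham]
      simp_rw [h6] at h5
      exact h5
    intro hsq2
    have h7 : (p:ℤ)^2 ∣ Φ := by
      rw [← hNZ, show ((p:ℤ)^2) = ((p*p : ℕ) : ℤ) by push_cast; ring]
      exact_mod_cast Int.natCast_dvd_natCast.mpr hsq2
    exact geom_sum_not_sq_dvd p hp hodd t (h7.trans hΦS)
  -- N squarefree, N ∣ d
  have hN0 : N ≠ 0 := by omega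
  have hsqN : Squarefree N := Nat.squarefree_iff_prime_squarefree.mpr
    (fun x hx hxx => (hkey x hx ((dvd_mul_right x x).trans hxx)).2 hxx)
  have hNdvd : N ∣ d := by
    rw [← Nat.factorization_le_iff_dvd hN0 (by omega)]
    refine Finsupp.le_def.mpr fun q => ?_
    by_cases hq : q.Prime
    · by_cases hqN : q ∣ N
      · have h1 : N.factorization q ≤ 1 := hsqN.natFactorization_le_one q
        have h2 : 1 ≤ d.factorization q := hq.factorization_pos_of_dvd (by omega) ((hkey q hq hqN).1)
        omega
      · simp [Nat.factorization_eq_zero_of_not_dvd hqN]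
    · simp [Nat.factorization_eq_zero_of_not_prime _ hq]
  have := Nat.le_of_dvd (by omega) hNdvd
  omega

lemma squarefree_prod_primes (s : Finset ℕ) (hs : ∀ p ∈ s, p.Prime) :
    Squarefree (∏ p ∈ s, p) := by
  have := Nat.primeFactors_prod hs
  classical
  induction s using Finset.induction_on with
  | empty => simpa using squarefree_one
  | insert q t hns ih =>
    rw [Finset.prod_insert hns]
    have hq := hs q (Finset.mem_insert_self q t)
    have ht : ∀ p ∈ t, p.Prime := fun p hp => hs p (Finset.mem_insert_of_mem hp)
    refine (Nat.squarefree_mul ?_).mpr ⟨hq.prime.squarefree, ih ht (Nat.primeFactors_prod ht)⟩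
    rw [Nat.Prime.coprime_iff_not_dvd hq]
    intro hdvd
    obtain ⟨r, hr, hqr⟩ := hq.prime.exists_mem_finset_dvd hdvd
    exact hns (((ht r hr).dvd_iff_eq hq.ne_one).mp hqr ▸ hr)

/-- `π_n`: the product of the first `n` prime numbers. -/
noncomputable def primesProd (n : ℕ) : ℕ := ∏ i ∈ Finset.range n, Nat.nth Nat.Prime i

/-- for `n ≥ 2`, the system `F = (x^{π_n} − 1, x − π_n)` has no common zero
in `ℂ`, yet the number of primes `p` such that its mod-`p` reductions have a common zero in
`ℤ/pℤ` is at least `2^n`. -/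
theorem koiran_example (n : ℕ) (hn : 2 ≤ n) :
    (¬ ∃ z : ℂ,
        Polynomial.aeval z ((Polynomial.X : Polynomial ℤ) ^ primesProd n - 1) = 0 ∧
        Polynomial.aeval z
          ((Polynomial.X : Polynomial ℤ) - Polynomial.C (primesProd n : ℤ)) = 0) ∧
    2 ^ n ≤ {p : ℕ | p.Prime ∧ ∃ y : ZMod p,
        Polynomial.aeval y ((Polynomial.X : Polynomial ℤ) ^ primesProd n - 1) = 0 ∧
        Polynomial.aeval y
          ((Polynomial.X : Polynomial ℤ) - Polynomial.C (primesProd n : ℤ)) = 0}.ncard := by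
  classical
  set a := primesProd n with hadef
  have hinj : Function.Injective (Nat.nth Nat.Prime) :=
    Nat.nth_injective Nat.infinite_setOf_prime
  set T : Finset ℕ := (Finset.range n).image (Nat.nth Nat.Prime) with hT
  have hTcard : T.card = n := by
    rw [hT, Finset.card_image_of_injective _ hinj, Finset.card_range]
  have hTprime : ∀ p ∈ T, p.Prime := by
    intro p hp
    rw [hT, Finset.mem_image] at hp
    obtain ⟨i, _, rfl⟩ := hp
    exact Nat.prime_nth_prime i
  have ha_eq : a = ∏ p ∈ T, p := by
    rw [hadef, primesProd, hT, Finset.prod_image (fun x _ y _ h => hinj h)]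
  have hsq : Squarefree a := ha_eq ▸ squarefree_prod_primes T hTprime
  have ha2 : 2 ∣ a := by
    rw [hadef, primesProd]
    have h0 : (0:ℕ) ∈ Finset.range n := Finset.mem_range.mpr (by omega)
    have := Finset.dvd_prod_of_mem (Nat.nth Nat.Prime) h0
    rwa [Nat.nth_prime_zero_eq_two] at this
  have ha6 : 6 ≤ a := by
    have hsub : Finset.range 2 ⊆ Finset.range n := Finset.range_subset_range.mpr hn
    have hdvd : (∏ i ∈ Finset.range 2, Nat.nth Nat.Prime i) ∣ a := by
      rw [hadef, primesProd]
      exact Finset.prod_dvd_prod_of_subset _ _ _ hsub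
    have h6 : (∏ i ∈ Finset.range 2, Nat.nth Nat.Prime i) = 6 := by
      rw [Finset.prod_range_succ, Finset.prod_range_one,
        Nat.nth_prime_zero_eq_two, Nat.nth_prime_one_eq_three]
      norm_num
    have ha0 : a ≠ 0 := hsq.ne_zero
    rw [h6] at hdvd
    exact Nat.le_of_dvd (by omega) hdvd
  constructor
  · rintro ⟨z, h1, h2⟩
    simp only [map_sub, map_pow, map_one, aeval_X, aeval_C, algebraMap_int_eq, eq_intCast,
      map_intCast, map_natCast, Int.cast_natCast, sub_eq_zero] at h1 h2
    rw [h2] at h1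
    have : ((a^a : ℕ) : ℂ) = ((1:ℕ) : ℂ) := by push_cast; exact h1
    have haa : a^a = 1 := Nat.cast_injective this
    have hle : a ≤ a^a := Nat.le_self_pow (by omega) a
    omega
  · set S := {p : ℕ | p.Prime ∧ ∃ y : ZMod p,
        Polynomial.aeval y ((Polynomial.X : Polynomial ℤ) ^ a - 1) = 0 ∧
        Polynomial.aeval y ((Polynomial.X : Polynomial ℤ) - Polynomial.C (a : ℤ)) = 0} with hS
    set M : ℕ := a^a - 1 with hM
    have hM1 : 1 ≤ a^a := Nat.one_le_pow _ _ (by omega)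
    have hM0 : M ≠ 0 := by
      have : 6 ≤ a^a := le_trans ha6 (Nat.le_self_pow (by omega) a)
      omega
    have hSsub : S ⊆ ↑M.primeFactors := by
      intro p hp
      obtain ⟨hpp, y, hy1, hy2⟩ := hp
      haveI : Fact p.Prime := ⟨hpp⟩
      simp only [map_sub, map_pow, map_one, aeval_X, aeval_C, algebraMap_int_eq, eq_intCast,
        map_intCast, map_natCast, Int.cast_natCast, sub_eq_zero] at hy1 hy2
      rw [hy2] at hy1
      have hcast : ((M:ℕ) : ZMod p) = 0 := by
        rw [hM, Nat.cast_sub hM1]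
        push_cast
        rw [hy1]
        ring
      have hdvd : p ∣ M := (ZMod.natCast_eq_zero_iff _ _).mp hcast
      exact Nat.mem_primeFactors.mpr ⟨hpp, hdvd, hM0⟩
    have hSfin : S.Finite := Set.Finite.subset (M.primeFactors.finite_toSet) hSsub
    have hex_all : ∀ s ∈ T.powerset, ∃ p, p.Prime ∧ orderOf ((a : ZMod p)) = ∏ q ∈ s, q := by
      intro s hs
      have hsub := Finset.mem_powerset.mp hs
      have hdvd : (∏ q ∈ s, q) ∣ a := by
        rw [ha_eq]
        exact Finset.prod_dvd_prod_of_subset _ _ _ hsub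
      exact exists_order_eq a (∏ q ∈ s, q) ha6 ha2 hsq hdvd
    choose! f hf1 hf2 using hex_all
    have hfspec : ∀ s ∈ T.powerset, (f s).Prime ∧ orderOf ((a : ZMod (f s))) = ∏ q ∈ s, q :=
      fun s hs => ⟨hf1 s hs, hf2 s hs⟩
    set I : Finset ℕ := T.powerset.image f with hI
    have hIcard : I.card = 2^n := by
      rw [hI, Finset.card_image_of_injOn, Finset.card_powerset, hTcard]
      intro s hs s' hs' hss
      have h1 := (hfspec s hs).2
      have h2 := (hfspec s' hs').2
      rw [hss, h2] at h1
      have hps : ∀ q ∈ s, q.Prime := fun q hq => hTprime q (Finset.mem_powerset.mp hs hq)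
      have hps' : ∀ q ∈ s', q.Prime := fun q hq => hTprime q (Finset.mem_powerset.mp hs' hq)
      rw [← Nat.primeFactors_prod hps, ← Nat.primeFactors_prod hps', h1]
    have hIS : ↑I ⊆ S := by
      intro p hp
      rw [hI] at hp
      simp only [Finset.coe_image, Set.mem_image, Finset.mem_coe] at hp
      obtain ⟨s, hs, rfl⟩ := hp
      obtain ⟨hpp, hord⟩ := hfspec s hs
      haveI : Fact (f s).Prime := ⟨hpp⟩
      refine ⟨hpp, (a : ZMod (f s)), ?_, ?_⟩
      · simp only [map_sub, map_pow, map_one, aeval_X, sub_eq_zero]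
        rw [← orderOf_dvd_iff_pow_eq_one, hord, ha_eq]
        exact Finset.prod_dvd_prod_of_subset _ _ _ (Finset.mem_powerset.mp hs)
      · simp only [map_sub, aeval_X, aeval_C, algebraMap_int_eq, eq_intCast, map_intCast, map_natCast, Int.cast_natCast, sub_eq_zero]
    calc (2:ℕ)^n = I.card := hIcard.symm
      _ = (↑I : Set ℕ).ncard := (Set.ncard_coe_finset I).symm
      _ ≤ S.ncard := Set.ncard_le_ncard hIS hSfin
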